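/- On the Banach module D₁(𝒲_n) = R⁺₁ ⊗̂ O(𝒲_n) with the P_m-action given by (u,v)·A(T) = e^{−vj}(1+T)^u A((1+T)^{e^v}−1), the derivations ∂_{m,1} = lim_{n→∞}(γ₁^{p^n}−1)/p^n and ∂_{m,2} = lim_{n→∞}(γ₂^{p^n}−1)/p^n (where γ₁ = (p^m,0), γ₂ = (0,p^m)) are given on monomials by ∂_{m,1}(T^i) = p^m·T^i·log(1+T) and ∂_{m,2}(T^i) = p^m·(i(1+T)T^{i−1}log(1+T) − j·T^i). -/

import Mathlib

open PowerSeries Filter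

/-- `log(1+T) = Σ_{k≥1} (-1)^{k+1} T^k / k` as a power series over `ℚ_p`. -/
noncomputable def log1p (p : ℕ) [Fact p.Prime] : PowerSeries ℚ_[p] :=
  PowerSeries.mk fun n => if n = 0 then 0 else (-1) ^ (n + 1) / (n : ℚ_[p])

/-- The binomial series `(1+T)^z = Σ_n C(z,n) Tⁿ` for `z ∈ ℚ_p`. -/
noncomputable def binomSeries (p : ℕ) [Fact p.Prime] (z : ℚ_[p]) : PowerSeries ℚ_[p] :=
  PowerSeries.mk fun n => (∏ t ∈ Finset.range n, (z - (t : ℚ_[p]))) / (n.factorial : ℚ_[p])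

section St14aux

variable {p : ℕ} [Fact p.Prime]
noncomputable def BPs (p : ℕ) [Fact p.Prime] : PowerSeries (Polynomial ℚ_[p]) :=
  PowerSeries.mk fun k => Polynomial.C ((k.factorial : ℚ_[p])⁻¹) *
    ∏ t ∈ Finset.range k, (Polynomial.X - Polynomial.C (t : ℚ_[p]))

lemma map_BPs (z : ℚ_[p]) :
    PowerSeries.map (Polynomial.evalRingHom z) (BPs p) = binomSeries p z := by
  ext k
  simp [BPs, binomSeries, div_eq_inv_mul, Polynomial.eval_prod]

lemma prod_nat_cast (P k : ℕ) :
    (∏ t ∈ Finset.range k, ((P : ℚ_[p]) - (t : ℚ_[p]))) =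
      (k.factorial : ℚ_[p]) * (P.choose k : ℚ_[p]) := by
  rcases le_or_gt k P with h | h
  · have hcongr : ∀ t ∈ Finset.range k, ((P : ℚ_[p]) - (t : ℚ_[p])) = ((P - t : ℕ) : ℚ_[p]) := by
      intro t ht
      have : t ≤ P := le_trans (Finset.mem_range.1 ht).le h
      push_cast [this]
      ring
    rw [Finset.prod_congr rfl hcongr, ← Nat.cast_prod, ← Nat.descFactorial_eq_prod_range,
      Nat.descFactorial_eq_factorial_mul_choose]
    push_cast; ring
  · rw [Finset.prod_eq_zero (Finset.mem_range.2 h) (by simp : ((P:ℚ_[p]) - (P:ℚ_[p])) = 0),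
      Nat.choose_eq_zero_of_lt h, Nat.cast_zero, mul_zero]

lemma binom_natCast (P : ℕ) : binomSeries p ((P : ℚ_[p])) = (1 + X) ^ P := by
  ext k
  have h1 : (PowerSeries.coeff (R := ℚ_[p]) k) ((1 + X) ^ P) = (P.choose k : ℚ_[p]) := by
    have : ((1 + X : PowerSeries ℚ_[p])) = ((1 + Polynomial.X : Polynomial ℚ_[p]) : PowerSeries ℚ_[p]) := by
      push_cast
      rfl
    rw [this, ← Polynomial.coe_pow, Polynomial.coeff_coe, Polynomial.coeff_one_add_X_pow]
  rw [h1]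
  have hf : ((k.factorial : ℚ_[p])) ≠ 0 := Nat.cast_ne_zero.2 k.factorial_ne_zero
  simp only [binomSeries, coeff_mk, prod_nat_cast]
  field_simp



-- Lemma A
lemma tendstoA (Q : Polynomial ℚ_[p]) (hQ : Q.eval 0 = 0) (z : ℕ → ℚ_[p]) (a : ℚ_[p])
    (hz : Filter.Tendsto z atTop (nhds 0))
    (ha : Filter.Tendsto (fun N => z N / (p : ℚ_[p]) ^ N) atTop (nhds a)) :
    Filter.Tendsto (fun N => Q.eval (z N) / (p : ℚ_[p]) ^ N) atTop (nhds (a * Q.coeff 1)) := by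
  have h0 : Q.coeff 0 = 0 := by rwa [Polynomial.coeff_zero_eq_eval_zero]
  obtain ⟨S, hS⟩ := Polynomial.X_dvd_iff.mpr h0
  have key : ∀ N, Q.eval (z N) / (p : ℚ_[p]) ^ N = z N / (p : ℚ_[p]) ^ N * S.eval (z N) := by
    intro N
    rw [hS, Polynomial.eval_mul, Polynomial.eval_X]
    ring
  simp only [key]
  have h2 : Filter.Tendsto (fun N => S.eval (z N)) atTop (nhds (S.eval 0)) :=
    (S.continuous_aeval.tendsto 0).comp hz
  have h3 := ha.mul h2
  have h4 : S.eval 0 = Q.coeff 1 := by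
    rw [hS, Polynomial.coeff_X_mul, Polynomial.coeff_zero_eq_eval_zero]
  rwa [h4] at h3

-- derivative evaluations of F k = ∏ (X - t)
noncomputable def Fp (p : ℕ) [Fact p.Prime] (k : ℕ) : Polynomial ℚ_[p] :=
  ∏ t ∈ Finset.range k, (Polynomial.X - Polynomial.C (t : ℚ_[p]))

lemma Fp_succ (k : ℕ) : Fp p (k + 1) = Fp p k * (Polynomial.X - Polynomial.C (k : ℚ_[p])) := by
  rw [Fp, Finset.prod_range_succ]; rfl

lemma Fp_eval (k : ℕ) (a : ℚ_[p]) : (Fp p k).eval a = ∏ t ∈ Finset.range k, (a - (t : ℚ_[p])) := by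
  simp [Fp, Polynomial.eval_prod]

lemma Fp_eval_zero (k : ℕ) : (Fp p (k + 1)).eval 0 = 0 := by
  rw [Fp_eval]
  exact Finset.prod_eq_zero (Finset.mem_range.2 k.succ_pos) (by simp)

lemma Fp_eval_one (k : ℕ) : (Fp p (k + 2)).eval 1 = 0 := by
  rw [Fp_eval]
  exact Finset.prod_eq_zero (Finset.mem_range.2 (by omega) : 1 ∈ Finset.range (k+2)) (by simp)

lemma Fp_deriv_zero (k : ℕ) :
    (Polynomial.derivative (Fp p (k + 1))).eval 0 = (-1) ^ k * (k.factorial : ℚ_[p]) := by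
  induction k with
  | zero => simp [Fp_succ, Fp]
  | succ k ih =>
      rw [Fp_succ, Polynomial.derivative_mul]
      simp only [Polynomial.eval_add, Polynomial.eval_mul, Polynomial.eval_sub,
        Polynomial.eval_X, Polynomial.eval_C, ih, Fp_eval_zero,
        Polynomial.derivative_sub, Polynomial.derivative_X, Polynomial.derivative_C,
        sub_zero, Polynomial.eval_one]
      rw [Nat.factorial_succ]
      push_cast
      ring

lemma Fp_deriv_one (k : ℕ) :
    (Polynomial.derivative (Fp p (k + 2))).eval 1 = (-1) ^ k * (k.factorial : ℚ_[p]) := by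
  induction k with
  | zero =>
      show (Polynomial.derivative (Fp p 2)).eval 1 = _
      have : Fp p 2 = Polynomial.X * (Polynomial.X - Polynomial.C (1:ℚ_[p])) := by
        rw [show (2:ℕ) = 1 + 1 from rfl, Fp_succ]
        norm_num [Fp]
      rw [this, Polynomial.derivative_mul]
      simp
  | succ k ih =>
      rw [Fp_succ, Polynomial.derivative_mul]
      simp only [Polynomial.eval_add, Polynomial.eval_mul, Polynomial.eval_sub,
        Polynomial.eval_X, Polynomial.eval_C, ih, Fp_eval_one,
        Polynomial.derivative_sub, Polynomial.derivative_X, Polynomial.derivative_C,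
        sub_zero, Polynomial.eval_one]
      rw [Nat.factorial_succ]
      push_cast
      ring



noncomputable def dc (f : PowerSeries (Polynomial ℚ_[p])) : PowerSeries (Polynomial ℚ_[p]) :=
  PowerSeries.mk fun n => Polynomial.derivative (PowerSeries.coeff n f)

@[simp] lemma coeff_dc (f : PowerSeries (Polynomial ℚ_[p])) (n : ℕ) :
    PowerSeries.coeff n (dc f) = Polynomial.derivative (PowerSeries.coeff n f) :=
  PowerSeries.coeff_mk _ _

lemma dc_one : dc (p := p) 1 = 0 := by
  ext n
  simp only [coeff_dc, PowerSeries.coeff_one, map_zero]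
  split <;> simp

lemma dc_sub (f g : PowerSeries (Polynomial ℚ_[p])) : dc (f - g) = dc f - dc g := by
  ext n; simp

lemma dc_mul (f g : PowerSeries (Polynomial ℚ_[p])) : dc (f * g) = dc f * g + f * dc g := by
  refine PowerSeries.ext fun n => ?_
  simp only [coeff_dc, PowerSeries.coeff_mul, map_add]
  rw [map_sum Polynomial.derivative, ← Finset.sum_add_distrib]
  exact Finset.sum_congr rfl fun x hx => by simp [Polynomial.derivative_mul]

lemma dc_pow (f : PowerSeries (Polynomial ℚ_[p])) (i : ℕ) :
    dc (f ^ i) = i • (f ^ (i - 1) * dc f) := by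
  induction i with
  | zero => simpa using dc_one
  | succ i ih =>
      rw [pow_succ, dc_mul, ih]
      rcases Nat.eq_zero_or_pos i with hi | hi
      · subst hi; simp
      · obtain ⟨k, rfl⟩ := Nat.exists_eq_add_of_le hi
        have h1 : (1 + k) - 1 = k := by omega
        have h2 : (1 + k + 1) - 1 = k + 1 := by omega
        rw [h1, h2]
        have h3 : f ^ k * dc f * f = f ^ (k + 1) * dc f := by ring
        rw [smul_mul_assoc, h3, succ_nsmul, show Nat.succ 0 + k = k + 1 from by omega]



lemma padicValNat_factorial_le_aux (k : ℕ) : padicValNat p (k + 1).factorial ≤ k := by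
  have hp2 := (Fact.out : p.Prime).two_le
  have hne : p.digits (k + 1) ≠ [] := Nat.digits_ne_nil_iff_ne_zero.2 (Nat.succ_ne_zero k)
  have hlast : (p.digits (k + 1)).getLast hne ≠ 0 :=
    Nat.getLast_digit_ne_zero p (Nat.succ_ne_zero k)
  have hdig : 1 ≤ (p.digits (k + 1)).sum := by
    calc 1 ≤ (p.digits (k + 1)).getLast hne := Nat.one_le_iff_ne_zero.2 hlast
      _ ≤ (p.digits (k + 1)).sum :=
        List.single_le_sum (fun x _ => Nat.zero_le x) _ (List.getLast_mem hne)
  have hleg := sub_one_mul_padicValNat_factorial (p := p) (k + 1)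
  have hv : padicValNat p (k + 1).factorial ≤ (p - 1) * padicValNat p (k + 1).factorial :=
    Nat.le_mul_of_pos_left _ (by omega)
  omega

lemma norm_natCast_padic (k : ℕ) (hk : k ≠ 0) :
    ‖(k : ℚ_[p])‖ = ((p : ℝ))⁻¹ ^ (padicValNat p k) := by
  have h1 : ((k : ℚ) : ℚ_[p]) = (k : ℚ_[p]) := by push_cast; rfl
  rw [← h1, Padic.eq_padicNorm,
    padicNorm.eq_zpow_of_nonzero (by exact_mod_cast hk), padicValRat.of_nat]
  have hp0 : (0:ℝ) < p := by exact_mod_cast (Fact.out : p.Prime).pos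
  push_cast
  rw [← zpow_natCast ((p:ℝ))⁻¹, inv_zpow, ← zpow_neg, padicValRat.of_nat]

lemma norm_factorial_inv_le (k : ℕ) :
    ‖((k.factorial : ℚ_[p]))⁻¹‖ ≤ (p : ℝ) ^ k := by
  have hp1 : (1:ℝ) < p := by exact_mod_cast (Fact.out : p.Prime).one_lt
  have hp0 : (0:ℝ) < p := lt_trans one_pos hp1
  rw [norm_inv, norm_natCast_padic _ k.factorial_ne_zero]
  rw [← inv_pow, inv_inv]
  cases k with
  | zero => simp
  | succ k =>
      calc (p:ℝ) ^ padicValNat p (k+1).factorial ≤ (p:ℝ) ^ k :=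
            pow_le_pow_right₀ hp1.le (padicValNat_factorial_le_aux k)
        _ ≤ (p:ℝ) ^ (k+1) := pow_le_pow_right₀ hp1.le (Nat.le_succ k)

lemma norm_factorial_inv_le' (k : ℕ) :
    ‖(((k+2).factorial : ℚ_[p]))⁻¹‖ ≤ (p : ℝ) ^ (k+1) := by
  have hp1 : (1:ℝ) < p := by exact_mod_cast (Fact.out : p.Prime).one_lt
  rw [norm_inv, norm_natCast_padic _ (k+2).factorial_ne_zero, ← inv_pow, inv_inv]
  exact pow_le_pow_right₀ hp1.le (padicValNat_factorial_le_aux (k+1))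

set_option maxHeartbeats 1000000 in
lemma exp_est (x : ℚ_[p]) (hx : ‖x‖ ≤ ((p : ℝ) ^ 2)⁻¹) :
    ‖NormedSpace.exp x - 1 - x‖ ≤ 2 * p * ‖x‖ ^ 2 := by
  have hp1 : (1:ℝ) < p := by exact_mod_cast (Fact.out : p.Prime).one_lt
  have hp0 : (0:ℝ) < p := lt_trans one_pos hp1
  have hx0 : (0:ℝ) ≤ ‖x‖ := norm_nonneg x
  set a : ℕ → ℚ_[p] := fun n => (n.factorial : ℚ_[p])⁻¹ * x ^ n with ha
  have hxp : ‖x‖ * p ≤ (p:ℝ)⁻¹ := by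
    have := mul_le_mul_of_nonneg_right hx hp0.le
    calc ‖x‖ * p ≤ ((p:ℝ)^2)⁻¹ * p := this
      _ = (p:ℝ)⁻¹ := by field_simp
  have hxp1 : ‖x‖ * p ≤ 1 := le_trans hxp (by
    rw [inv_le_one_iff₀]; right; exact hp1.le)
  have hterm : ∀ n, ‖a n‖ ≤ ((p:ℝ)⁻¹) ^ n := by
    intro n
    rw [ha]
    simp only [norm_mul, norm_pow]
    calc ‖((n.factorial : ℚ_[p]))⁻¹‖ * ‖x‖ ^ n ≤ (p:ℝ) ^ n * ‖x‖ ^ n := by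
          gcongr
          exact norm_factorial_inv_le n
      _ = (‖x‖ * p) ^ n := by ring
      _ ≤ ((p:ℝ)⁻¹) ^ n := by
          apply pow_le_pow_left₀ (by positivity) hxp
  have hnorm_sum : Summable fun n => ‖a n‖ :=
    Summable.of_nonneg_of_le (fun n => norm_nonneg _) hterm
      (summable_geometric_of_lt_one (by positivity) (by
        rw [inv_lt_one_iff₀]; right; exact hp1))
  have hsum : Summable a := hnorm_sum.of_norm
  have hexp : NormedSpace.exp x = ∑' n, a n := by
    rw [NormedSpace.exp_eq_tsum ℚ_[p]]
    simp [ha, smul_eq_mul]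
  have hsum1 : Summable fun n => a (n + 1) := (summable_nat_add_iff 1).mpr hsum
  have hsplit : NormedSpace.exp x - 1 - x = ∑' n, a (n + 2) := by
    rw [hexp, hsum.tsum_eq_zero_add, hsum1.tsum_eq_zero_add]
    have h0 : a 0 = 1 := by simp [ha]
    have h1 : a 1 = x := by simp [ha]
    have h2 : ∑' n, a (n + 1 + 1) = ∑' n, a (n + 2) := by
      exact tsum_congr fun n => by norm_num
    rw [h0, h1, h2]
    ring
  rw [hsplit]
  have hgeo : Summable fun n : ℕ => ((p:ℝ)⁻¹) ^ n :=
    summable_geometric_of_lt_one (by positivity) (by rw [inv_lt_one_iff₀]; right; exact hp1)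
  have hbound : ∀ n, ‖a (n + 2)‖ ≤ p * ‖x‖ ^ 2 * ((p:ℝ)⁻¹) ^ n := by
    intro n
    simp only [ha, norm_mul, norm_pow]
    calc ‖(((n+2).factorial : ℚ_[p]))⁻¹‖ * ‖x‖ ^ (n+2) ≤ (p:ℝ) ^ (n+1) * ‖x‖ ^ (n+2) := by
          gcongr
          exact norm_factorial_inv_le' n
      _ = (‖x‖ * p) ^ n * (p * ‖x‖ ^ 2) := by ring
      _ ≤ ((p:ℝ)⁻¹) ^ n * (p * ‖x‖ ^ 2) := by
          have := pow_le_pow_left₀ (by positivity : (0:ℝ) ≤ ‖x‖ * p) hxp n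
          have hpos : (0:ℝ) ≤ p * ‖x‖ ^ 2 := by positivity
          exact mul_le_mul_of_nonneg_right this hpos
      _ = p * ‖x‖ ^ 2 * ((p:ℝ)⁻¹) ^ n := by ring
  have hg : Summable fun n => p * ‖x‖ ^ 2 * ((p:ℝ)⁻¹) ^ n := hgeo.mul_left _
  have hsn2 : Summable fun n => ‖a (n + 2)‖ := (summable_nat_add_iff 2).mpr hnorm_sum
  calc ‖∑' n, a (n + 2)‖ ≤ ∑' n, ‖a (n + 2)‖ := norm_tsum_le_tsum_norm hsn2
    _ ≤ ∑' n, p * ‖x‖ ^ 2 * ((p:ℝ)⁻¹) ^ n := Summable.tsum_le_tsum hbound hsn2 hg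
    _ = p * ‖x‖ ^ 2 * (1 - (p:ℝ)⁻¹)⁻¹ := by
        rw [tsum_mul_left, tsum_geometric_of_lt_one (by positivity)
          (by rw [inv_lt_one_iff₀]; right; exact hp1)]
    _ ≤ 2 * p * ‖x‖ ^ 2 := by
        have h2p : (2:ℝ) ≤ p := by exact_mod_cast (Fact.out : p.Prime).two_le
        have hinv : (p:ℝ)⁻¹ ≤ 2⁻¹ := by
          apply inv_anti₀ (by norm_num) h2p
        have hpos : (0:ℝ) < 1 - (p:ℝ)⁻¹ := by
          have : (p:ℝ)⁻¹ < 1 := by rw [inv_lt_one_iff₀]; right; exact hp1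
          linarith
        have hle : (1 - (p:ℝ)⁻¹)⁻¹ ≤ 2 := by
          rw [inv_le_comm₀ hpos (by norm_num)]
          linarith
        calc p * ‖x‖ ^ 2 * (1 - (p:ℝ)⁻¹)⁻¹ ≤ p * ‖x‖ ^ 2 * 2 :=
              mul_le_mul_of_nonneg_left hle (by positivity)
          _ = 2 * p * ‖x‖ ^ 2 := by ring





lemma pcast_ne (p : ℕ) [Fact p.Prime] : ((p : ℚ_[p])) ≠ 0 :=
  Nat.cast_ne_zero.2 (Fact.out : p.Prime).ne_zero

lemma tendsto_ppow_zero : Filter.Tendsto (fun N : ℕ => (p : ℚ_[p]) ^ N) atTop (nhds 0) :=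
  tendsto_pow_atTop_nhds_zero_of_norm_lt_one Padic.norm_p_lt_one

lemma exp_shift (m : ℕ) (hm : 1 ≤ m) (b : ℚ_[p]) (hb : ‖b‖ ≤ 1) :
    Filter.Tendsto
      (fun N : ℕ => (NormedSpace.exp (b * (p : ℚ_[p]) ^ (m + N)) - 1) / (p : ℚ_[p]) ^ N)
      atTop (nhds (b * (p : ℚ_[p]) ^ m)) := by
  have hp1 : (1:ℝ) < p := by exact_mod_cast (Fact.out : p.Prime).one_lt
  have hp0 : (0:ℝ) < p := lt_trans one_pos hp1
  have hpinv1 : ((p:ℝ))⁻¹ ≤ 1 := by rw [inv_le_one_iff₀]; right; exact hp1.le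
  have hpinv0 : (0:ℝ) ≤ ((p:ℝ))⁻¹ := by positivity
  set x : ℕ → ℚ_[p] := fun N => b * (p : ℚ_[p]) ^ (m + N) with hxdef
  have hxnorm : ∀ N, ‖x N‖ ≤ ((p:ℝ)⁻¹) ^ (m + N) := by
    intro N
    rw [hxdef]
    simp only [norm_mul, norm_pow, Padic.norm_p]
    calc ‖b‖ * ((p:ℝ)⁻¹) ^ (m + N) ≤ 1 * ((p:ℝ)⁻¹) ^ (m + N) := by gcongr
      _ = ((p:ℝ)⁻¹) ^ (m + N) := one_mul _
  have hkey : ∀ N, x N / (p : ℚ_[p]) ^ N = b * (p : ℚ_[p]) ^ m := by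
    intro N
    show b * (p : ℚ_[p]) ^ (m + N) / (p : ℚ_[p]) ^ N = _
    rw [pow_add, ← mul_assoc, mul_div_assoc, div_self (pow_ne_zero N (pcast_ne p)), mul_one]
  have hdecomp : ∀ N, (NormedSpace.exp (x N) - 1) / (p : ℚ_[p]) ^ N =
      b * (p : ℚ_[p]) ^ m + (NormedSpace.exp (x N) - 1 - x N) / (p : ℚ_[p]) ^ N := by
    intro N
    rw [← hkey N]
    have : ((p : ℚ_[p]) ^ N) ≠ 0 := pow_ne_zero _ (pcast_ne p)
    field_simp
    ring
  show Filter.Tendsto (fun N : ℕ => (NormedSpace.exp (x N) - 1) / (p : ℚ_[p]) ^ N) atTop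
    (nhds (b * (p : ℚ_[p]) ^ m))
  simp only [hdecomp]
  have herr : Filter.Tendsto
      (fun N => (NormedSpace.exp (x N) - 1 - x N) / (p : ℚ_[p]) ^ N) atTop (nhds 0) := by
    apply squeeze_zero_norm' (a := fun N => (2 * p * ((p:ℝ)⁻¹) ^ (2 * m)) * ((p:ℝ)⁻¹) ^ N)
    · filter_upwards [Filter.eventually_ge_atTop 1] with N hN
      have hx2 : ‖x N‖ ≤ ((p:ℝ) ^ 2)⁻¹ := by
        calc ‖x N‖ ≤ ((p:ℝ)⁻¹) ^ (m + N) := hxnorm N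
          _ ≤ ((p:ℝ)⁻¹) ^ 2 := pow_le_pow_of_le_one hpinv0 hpinv1 (by omega)
          _ = ((p:ℝ) ^ 2)⁻¹ := by rw [inv_pow]
      have hest := exp_est (x N) hx2
      rw [norm_div, norm_pow, Padic.norm_p]
      have hXn : (0:ℝ) ≤ ‖x N‖ := norm_nonneg _
      calc ‖NormedSpace.exp (x N) - 1 - x N‖ / ((p:ℝ)⁻¹) ^ N
            ≤ (2 * p * (((p:ℝ)⁻¹) ^ (m + N)) ^ 2) / ((p:ℝ)⁻¹) ^ N := by
            have h1 : ‖NormedSpace.exp (x N) - 1 - x N‖ ≤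
                2 * p * (((p:ℝ)⁻¹) ^ (m + N)) ^ 2 := by
              calc ‖NormedSpace.exp (x N) - 1 - x N‖ ≤ 2 * p * ‖x N‖ ^ 2 := hest
                _ ≤ 2 * p * (((p:ℝ)⁻¹) ^ (m + N)) ^ 2 := by gcongr; exact hxnorm N
            exact div_le_div_of_nonneg_right h1 (by positivity)

          _ = (2 * p * ((p:ℝ)⁻¹) ^ (2 * m)) * ((p:ℝ)⁻¹) ^ N := by
            rw [div_eq_iff (by positivity : (((p:ℝ)⁻¹) ^ N) ≠ 0)]
            ring
    · have h := (tendsto_pow_atTop_nhds_zero_of_norm_lt_one (x := ((p:ℝ))⁻¹) (by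
        rw [Real.norm_eq_abs, abs_of_nonneg hpinv0, inv_lt_one_iff₀]
        right; exact hp1)).const_mul (2 * (p:ℝ) * ((p:ℝ)⁻¹) ^ (2 * m))
      simpa using h
  have := (tendsto_const_nhds (x := b * (p : ℚ_[p]) ^ m) (f := atTop (α := ℕ))).add herr
  simpa using this


lemma exp_shift0 (m : ℕ) (hm : 1 ≤ m) (b : ℚ_[p]) (hb : ‖b‖ ≤ 1) :
    Filter.Tendsto (fun N : ℕ => NormedSpace.exp (b * (p : ℚ_[p]) ^ (m + N)) - 1)
      atTop (nhds 0) := by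
  have h := (exp_shift m hm b hb).mul tendsto_ppow_zero
  have heq : ∀ N : ℕ,
      (NormedSpace.exp (b * (p : ℚ_[p]) ^ (m + N)) - 1) / (p : ℚ_[p]) ^ N * (p : ℚ_[p]) ^ N
      = NormedSpace.exp (b * (p : ℚ_[p]) ^ (m + N)) - 1 :=
    fun N => div_mul_cancel₀ _ (pow_ne_zero _ (pcast_ne p))
  simp only [heq] at h
  simpa using h

lemma coeff1_BPs (k : ℕ) :
    (PowerSeries.coeff (R := Polynomial ℚ_[p]) k (BPs p)).coeff 1 = PowerSeries.coeff (R := ℚ_[p]) k (log1p p) := by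
  have hBk : PowerSeries.coeff (R := Polynomial ℚ_[p]) k (BPs p)
      = Polynomial.C ((k.factorial : ℚ_[p])⁻¹) * Fp p k := by
    simp [BPs, Fp, PowerSeries.coeff_mk]
  rw [hBk, Polynomial.coeff_C_mul]
  have hc1 : ∀ R : Polynomial ℚ_[p], R.coeff 1 = (Polynomial.derivative R).eval 0 := by
    intro R
    rw [← Polynomial.coeff_zero_eq_eval_zero, Polynomial.coeff_derivative]
    simp
  cases k with
  | zero => simp [Fp, log1p, Polynomial.coeff_one]
  | succ k =>
      rw [hc1, Fp_deriv_zero]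
      simp only [log1p, PowerSeries.coeff_mk, Nat.succ_ne_zero, if_false]
      have h1 : ((k+1:ℕ) : ℚ_[p]) ≠ 0 := Nat.cast_ne_zero.2 (Nat.succ_ne_zero k)
      have h2 : ((k.factorial : ℚ_[p])) ≠ 0 := Nat.cast_ne_zero.2 k.factorial_ne_zero
      have hfact : (((k+1).factorial : ℚ_[p])) = ((k+1 : ℕ) : ℚ_[p]) * (k.factorial : ℚ_[p]) := by
        rw [Nat.factorial_succ]; push_cast; ring
      have e2 : ((-1:ℚ_[p])) ^ (k+1+1) = (-1)^k := by
        rw [show k+1+1 = k+2 from rfl, pow_add]; norm_num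
      rw [hfact, mul_inv, e2]
      push_cast at h1 h2 ⊢
      field_simp

lemma map1_dc :
    PowerSeries.map (Polynomial.evalRingHom (1:ℚ_[p])) (dc (BPs p)) = (1 + X) * log1p p := by
  ext k
  rw [PowerSeries.coeff_map, coeff_dc]
  have hBk : PowerSeries.coeff (R := Polynomial ℚ_[p]) k (BPs p)
      = Polynomial.C ((k.factorial : ℚ_[p])⁻¹) * Fp p k := by
    simp [BPs, Fp, PowerSeries.coeff_mk]
  rw [hBk, Polynomial.derivative_C_mul]
  have hRHS : PowerSeries.coeff (R := ℚ_[p]) k ((1 + X) * log1p p)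
      = PowerSeries.coeff (R := ℚ_[p]) k (log1p p) + PowerSeries.coeff (R := ℚ_[p]) k (X * log1p p) := by
    rw [add_mul, one_mul, map_add]
  rw [hRHS]
  show Polynomial.eval 1 (Polynomial.C ((k.factorial : ℚ_[p]))⁻¹ * Polynomial.derivative (Fp p k)) = _
  rw [Polynomial.eval_mul, Polynomial.eval_C]
  match k with
  | 0 => simp [Fp, log1p]
  | 1 =>
      have : Fp p 1 = Polynomial.X := by simp [Fp]
      rw [this]
      simp [log1p]
  | (k+2) =>
      rw [Fp_deriv_one]
      rw [PowerSeries.coeff_succ_X_mul]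
      simp only [log1p, PowerSeries.coeff_mk, Nat.succ_ne_zero, if_false]
      have h1 : ((k+1:ℕ) : ℚ_[p]) ≠ 0 := Nat.cast_ne_zero.2 (Nat.succ_ne_zero k)
      have h2 : ((k+2:ℕ) : ℚ_[p]) ≠ 0 := Nat.cast_ne_zero.2 (Nat.succ_ne_zero (k+1))
      have h3 : ((k.factorial : ℚ_[p])) ≠ 0 := Nat.cast_ne_zero.2 k.factorial_ne_zero
      have hfact : (((k+2).factorial : ℚ_[p])) =
          ((k+2:ℕ):ℚ_[p]) * (((k+1:ℕ):ℚ_[p]) * (k.factorial : ℚ_[p])) := by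
        rw [Nat.factorial_succ, Nat.factorial_succ]; push_cast; ring
      have e1 : ((-1:ℚ_[p])) ^ (k+2+1) = -(-1)^k := by
        rw [show k+2+1 = k+3 from rfl, pow_add]; norm_num
      have e2 : ((-1:ℚ_[p])) ^ (k+1+1) = (-1)^k := by
        rw [show k+1+1 = k+2 from rfl, pow_add]; norm_num
      rw [hfact, mul_inv, mul_inv, e1, e2]
      push_cast at h1 h2 h3 ⊢
      field_simp
      ring


end St14aux

/-!
STATEMENT 14. On `D₁(𝒲_n) = R₁⁺ ⊗̂ 𝒪(𝒲_n)` with the `P_m`-action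
`(u,v)·A(T) = e^{-vj}(1+T)^u A((1+T)^{e^v}-1)`, the derivations
`∂_{m,1} = lim_N (γ₁^{p^N}-1)/p^N` and `∂_{m,2} = lim_N (γ₂^{p^N}-1)/p^N`
(`γ₁ = (p^m,0)`, `γ₂ = (0,p^m)`) are given on monomials by
`∂_{m,1}(T^i) = p^m·T^i·log(1+T)` and
`∂_{m,2}(T^i) = p^m·(i(1+T)T^{i-1}log(1+T) - j·T^i)`.

Note `γ₁^{p^N} = (p^{m+N},0)` acts by `T^i ↦ (1+T)^{p^{m+N}}·T^i`, and
`γ₂^{p^N} = (0,p^{m+N})` acts by `T^i ↦ e^{-p^{m+N}j}((1+T)^{e^{p^{m+N}}}-1)^i`;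
the limits are taken coefficientwise (each coefficient lies in the `p`-adic
Banach algebra `𝒪(𝒲_n)`, here modelled by `ℚ_p`-coefficients).
-/
theorem statement14 (p : ℕ) [Fact p.Prime] (m j i : ℕ) (hm : 1 ≤ m) (hj : 1 ≤ j) :
    (∀ n : ℕ,
      Tendsto (fun N : ℕ =>
          (PowerSeries.coeff (R := ℚ_[p]) n)
              ((1 + X) ^ (p ^ (m + N)) * X ^ i - X ^ i) / (p : ℚ_[p]) ^ N)
        atTop
        (nhds ((PowerSeries.coeff (R := ℚ_[p]) n) (((p : ℚ_[p]) ^ m) • (X ^ i * log1p p))))) ∧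
    (∀ n : ℕ,
      Tendsto (fun N : ℕ =>
          (PowerSeries.coeff (R := ℚ_[p]) n)
              ((NormedSpace.exp (-((j : ℚ_[p]) * (p : ℚ_[p]) ^ (m + N)))) •
                  (binomSeries p (NormedSpace.exp ((p : ℚ_[p]) ^ (m + N))) - 1) ^ i
                - X ^ i) / (p : ℚ_[p]) ^ N)
        atTop
        (nhds ((PowerSeries.coeff (R := ℚ_[p]) n)
          (((p : ℚ_[p]) ^ m) •
            ((i : ℚ_[p]) • ((1 + X) * X ^ (i - 1) * log1p p) - (j : ℚ_[p]) • X ^ i))))) := by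
  classical
  constructor
  · intro n
    set Q : Polynomial ℚ_[p] :=
      PowerSeries.coeff (R := Polynomial ℚ_[p]) n (BPs p * X ^ i - X ^ i) with hQdef
    have heval : ∀ z : ℚ_[p],
        Q.eval z = PowerSeries.coeff (R := ℚ_[p]) n (binomSeries p z * X ^ i - X ^ i) := by
      intro z
      calc Q.eval z
          = (Polynomial.evalRingHom z) (PowerSeries.coeff n (BPs p * X ^ i - X ^ i)) := rfl
        _ = PowerSeries.coeff (R := ℚ_[p]) n
              (PowerSeries.map (Polynomial.evalRingHom z) (BPs p * X ^ i - X ^ i)) :=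
            (PowerSeries.coeff_map _ _ _).symm
        _ = _ := by rw [map_sub, map_mul, map_pow, PowerSeries.map_X, map_BPs]
    have hQ0 : Q.eval 0 = 0 := by
      rw [heval 0, show (0:ℚ_[p]) = ((0:ℕ):ℚ_[p]) by norm_num, binom_natCast]
      simp
    have hQ1 : Q.coeff 1 = PowerSeries.coeff (R := ℚ_[p]) n (X ^ i * log1p p) := by
      have hR : (X ^ i * log1p p : PowerSeries ℚ_[p]) = log1p p * X ^ i := mul_comm _ _
      rw [hQdef, map_sub, Polynomial.coeff_sub, PowerSeries.coeff_mul_X_pow',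
        PowerSeries.coeff_X_pow, hR, PowerSeries.coeff_mul_X_pow']
      by_cases hin : i ≤ n
      · rw [if_pos hin, if_pos hin, coeff1_BPs]
        have hz : ((if n = i then (1:Polynomial ℚ_[p]) else 0)).coeff 1 = 0 := by
          split <;> simp [Polynomial.coeff_one]
        rw [hz, sub_zero]
      · rw [if_neg hin, if_neg hin]
        have hni : ¬ (n = i) := fun h => hin (le_of_eq h.symm)
        rw [if_neg hni]
        simp
    have hseq : ∀ N : ℕ,
        PowerSeries.coeff (R := ℚ_[p]) n ((1 + X) ^ p ^ (m + N) * X ^ i - X ^ i)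
          = Q.eval ((p : ℚ_[p]) ^ (m + N)) := by
      intro N
      rw [heval]
      have hcast : ((p ^ (m + N) : ℕ) : ℚ_[p]) = (p : ℚ_[p]) ^ (m + N) := by push_cast; ring
      rw [← hcast, binom_natCast]
    have hz : Filter.Tendsto (fun N : ℕ => (p : ℚ_[p]) ^ (m + N)) atTop (nhds 0) := by
      simp only [pow_add]
      have h := tendsto_ppow_zero.const_mul ((p : ℚ_[p]) ^ m)
      simpa using h
    have ha : Filter.Tendsto (fun N : ℕ => (p : ℚ_[p]) ^ (m + N) / (p : ℚ_[p]) ^ N)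
        atTop (nhds ((p : ℚ_[p]) ^ m)) := by
      have hkey : ∀ N : ℕ, (p : ℚ_[p]) ^ (m + N) / (p : ℚ_[p]) ^ N = (p : ℚ_[p]) ^ m := by
        intro N
        rw [pow_add, mul_div_assoc, div_self (pow_ne_zero N (pcast_ne p)), mul_one]
      simp only [hkey]
      exact tendsto_const_nhds
    have hmain := tendstoA Q hQ0 (fun N => (p : ℚ_[p]) ^ (m + N)) ((p : ℚ_[p]) ^ m) hz ha
    simp only [hseq]
    have htarget : PowerSeries.coeff (R := ℚ_[p]) n (((p : ℚ_[p]) ^ m) • (X ^ i * log1p p))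
        = (p : ℚ_[p]) ^ m * Q.coeff 1 := by
      rw [map_smul, smul_eq_mul, hQ1]
    rw [htarget]
    exact hmain
  · intro n
    set Q : Polynomial ℚ_[p] :=
      PowerSeries.coeff (R := Polynomial ℚ_[p]) n ((BPs p - 1) ^ i) with hQdef
    have heval : ∀ z : ℚ_[p],
        Q.eval z = PowerSeries.coeff (R := ℚ_[p]) n ((binomSeries p z - 1) ^ i) := by
      intro z
      calc Q.eval z
          = (Polynomial.evalRingHom z) (PowerSeries.coeff n ((BPs p - 1) ^ i)) := rfl
        _ = PowerSeries.coeff (R := ℚ_[p]) n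
              (PowerSeries.map (Polynomial.evalRingHom z) ((BPs p - 1) ^ i)) :=
            (PowerSeries.coeff_map _ _ _).symm
        _ = _ := by rw [map_pow, map_sub, map_one, map_BPs]
    set c : ℚ_[p] := PowerSeries.coeff (R := ℚ_[p]) n (X ^ i : PowerSeries ℚ_[p]) with hcdef
    have hbinom1 : binomSeries p (1:ℚ_[p]) = 1 + X := by
      have h := binom_natCast (p := p) 1
      rw [Nat.cast_one] at h
      rw [h, pow_one]
    have hQe1 : Q.eval 1 = c := by rw [heval, hbinom1, hcdef]; simp
    have hQD : Q.derivative.eval 1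
        = (i : ℚ_[p]) * PowerSeries.coeff (R := ℚ_[p]) n (X ^ (i - 1) * ((1 + X) * log1p p)) := by
      have h1 : Q.derivative = PowerSeries.coeff n (dc ((BPs p - 1) ^ i)) := by
        rw [coeff_dc, hQdef]
      rw [h1, dc_pow, dc_sub, dc_one, sub_zero]
      calc Polynomial.eval 1 (PowerSeries.coeff n (i • ((BPs p - 1) ^ (i - 1) * dc (BPs p))))
          = (Polynomial.evalRingHom (1:ℚ_[p]))
              (PowerSeries.coeff n (i • ((BPs p - 1) ^ (i - 1) * dc (BPs p)))) := rfl
        _ = PowerSeries.coeff (R := ℚ_[p]) n (PowerSeries.map (Polynomial.evalRingHom (1:ℚ_[p]))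
              (i • ((BPs p - 1) ^ (i - 1) * dc (BPs p)))) := (PowerSeries.coeff_map _ _ _).symm
        _ = PowerSeries.coeff (R := ℚ_[p]) n
              (i • ((X:PowerSeries ℚ_[p]) ^ (i - 1) * ((1 + X) * log1p p))) := by
            rw [map_nsmul, map_mul, map_pow, map_sub, map_one, map_BPs, hbinom1, map1_dc,
              add_sub_cancel_left]
        _ = (i : ℚ_[p]) * PowerSeries.coeff (R := ℚ_[p]) n (X ^ (i - 1) * ((1 + X) * log1p p)) := by
            rw [map_nsmul, nsmul_eq_mul]
    set Qt : Polynomial ℚ_[p] :=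
      Q.comp (Polynomial.X + 1) - Polynomial.C c * (Polynomial.X + 1) ^ j with hQtdef
    set U : Polynomial ℚ_[p] := (Polynomial.X + 1) ^ j - 1 with hUdef
    have hQt_eval : ∀ v : ℚ_[p], Qt.eval v = Q.eval (v + 1) - c * (v + 1) ^ j := by
      intro v; simp [hQtdef, Polynomial.eval_comp]
    have hU_eval : ∀ v : ℚ_[p], U.eval v = (v + 1) ^ j - 1 := by
      intro v; simp [hUdef]
    have hQt0 : Qt.eval 0 = 0 := by rw [hQt_eval]; simp [hQe1]
    have hU0 : U.eval 0 = 0 := by rw [hU_eval]; simp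
    have hc1 : ∀ R : Polynomial ℚ_[p], R.coeff 1 = (Polynomial.derivative R).eval 0 := by
      intro R
      rw [← Polynomial.coeff_zero_eq_eval_zero, Polynomial.coeff_derivative]
      simp
    have hU1 : U.coeff 1 = (j : ℚ_[p]) := by
      rw [hUdef, Polynomial.coeff_sub, Polynomial.coeff_X_add_one_pow, Polynomial.coeff_one]
      simp
    have hQt1 : Qt.coeff 1 = Q.derivative.eval 1 - c * j := by
      rw [hQtdef, Polynomial.coeff_sub]
      congr 1
      · rw [hc1, Polynomial.derivative_comp]
        simp [Polynomial.eval_comp]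
      · rw [Polynomial.coeff_C_mul, Polynomial.coeff_X_add_one_pow]
        simp
    set w : ℕ → ℚ_[p] := fun N => NormedSpace.exp ((p:ℚ_[p]) ^ (m + N)) - 1 with hwdef
    set w' : ℕ → ℚ_[p] := fun N =>
      NormedSpace.exp (-((j:ℚ_[p]) * (p:ℚ_[p]) ^ (m + N))) - 1 with hw'def
    have hwlim : Tendsto (fun N => w N / (p:ℚ_[p]) ^ N) atTop (nhds ((p:ℚ_[p]) ^ m)) := by
      have h := exp_shift (p := p) m hm 1 (by simp)
      simp only [one_mul] at h
      simpa [hwdef] using h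
    have hw0 : Tendsto w atTop (nhds 0) := by
      have h := exp_shift0 (p := p) m hm 1 (by simp)
      simp only [one_mul] at h
      simpa [hwdef] using h
    have hjnorm : ‖(-(j:ℚ_[p]))‖ ≤ 1 := by
      rw [norm_neg]
      have h := Padic.norm_int_le_one (p := p) (j : ℤ)
      simpa using h
    have hw'lim : Tendsto (fun N => w' N / (p:ℚ_[p]) ^ N) atTop
        (nhds (-(j:ℚ_[p]) * (p:ℚ_[p]) ^ m)) := by
      have h := exp_shift (p := p) m hm (-(j:ℚ_[p])) hjnorm
      simp only [neg_mul] at h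
      simpa [hw'def] using h
    have hw'0 : Tendsto w' atTop (nhds 0) := by
      have h := exp_shift0 (p := p) m hm (-(j:ℚ_[p])) hjnorm
      simp only [neg_mul] at h
      simpa [hw'def] using h
    have hQtlim := tendstoA Qt hQt0 w ((p:ℚ_[p]) ^ m) hw0 hwlim
    have hUlim := tendstoA U hU0 w ((p:ℚ_[p]) ^ m) hw0 hwlim
    have hE : ∀ N, NormedSpace.exp (-((j:ℚ_[p]) * (p:ℚ_[p]) ^ (m + N))) = w' N + 1 := by
      intro N; simp only [hw'def]; ring
    have hzw : ∀ N, NormedSpace.exp ((p:ℚ_[p]) ^ (m + N)) = w N + 1 := by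
      intro N; simp only [hwdef]; ring
    have hElim : Tendsto (fun N => w' N + 1) atTop (nhds (1:ℚ_[p])) := by
      have h := hw'0.add_const (1:ℚ_[p])
      rw [zero_add] at h
      exact h
    have hpowlim : Tendsto (fun N => (w N + 1) ^ j) atTop (nhds (1:ℚ_[p])) := by
      have h := ((hw0.add_const (1:ℚ_[p])).pow j)
      rw [zero_add, one_pow] at h
      exact h
    have hdecomp : ∀ N : ℕ,
        PowerSeries.coeff (R := ℚ_[p]) n
            ((NormedSpace.exp (-((j:ℚ_[p]) * (p:ℚ_[p]) ^ (m + N)))) •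
              (binomSeries p (NormedSpace.exp ((p:ℚ_[p]) ^ (m + N))) - 1) ^ i - X ^ i)
            / (p:ℚ_[p]) ^ N
        = (w' N + 1) * (Qt.eval (w N) / (p:ℚ_[p]) ^ N)
          + c * (w' N / (p:ℚ_[p]) ^ N * (w N + 1) ^ j + U.eval (w N) / (p:ℚ_[p]) ^ N) := by
      intro N
      rw [map_sub, map_smul, smul_eq_mul, ← heval, hE, hzw, ← hcdef,
        hQt_eval (w N), hU_eval (w N)]
      have hpN : ((p:ℚ_[p]) ^ N) ≠ 0 := pow_ne_zero _ (pcast_ne p)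
      field_simp
      ring
    simp only [hdecomp]
    have htot := (hElim.mul hQtlim).add ((hw'lim.mul hpowlim).add hUlim |>.const_mul c)
    have hval : PowerSeries.coeff (R := ℚ_[p]) n
        (((p : ℚ_[p]) ^ m) •
          ((i : ℚ_[p]) • ((1 + X) * X ^ (i - 1) * log1p p) - (j : ℚ_[p]) • X ^ i))
        = 1 * ((p:ℚ_[p]) ^ m * Qt.coeff 1)
          + c * ((-(j:ℚ_[p]) * (p:ℚ_[p]) ^ m) * 1 + (p:ℚ_[p]) ^ m * U.coeff 1) := by
      rw [show ((1 + X) * X ^ (i - 1) * log1p p : PowerSeries ℚ_[p])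
          = X ^ (i - 1) * ((1 + X) * log1p p) from by ring]
      rw [map_smul, smul_eq_mul, map_sub, map_smul, map_smul, smul_eq_mul, smul_eq_mul,
        ← hcdef, hQt1, hU1, hQD]
      ring
    rw [hval]
    exact htot
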